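/- Let k ≥ 2 be an integer and consider a process on an integer state m starting at m = k and ending when m = 1, where each step picks some j with 2 ≤ j ≤ m, pays cost at most (j/m)·OPT, and replaces m by m - j + 1. Then the total cost paid over all steps is at most 2·OPT·ln k. -/
import Mathlib


open Finset

/-- Potential-function lemma: a process starting at m = k, each step merging j
components (2 ≤ j ≤ m) at cost at most (j/m)·OPT and replacing m by m - j + 1,
ending at m = 1, pays total cost at most 2·OPT·ln k. -/
theorem stmt_14 (OPT : ℝ) (hOPT : 0 < OPT) (k : ℕ) (hk : 2 ≤ k)
    (T : ℕ) (m j : ℕ → ℕ) (cost : ℕ → ℝ)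
    (hm0 : m 0 = k) (hmT : m T = 1)
    (hstep : ∀ s < T, 2 ≤ j s ∧ j s ≤ m s ∧
      cost s ≤ ((j s : ℝ) / (m s : ℝ)) * OPT ∧ m (s + 1) = m s - j s + 1)
    (hcost : ∀ s, 0 ≤ cost s) :
    ∑ s ∈ Finset.range T, cost s ≤ 2 * OPT * Real.log k := by
  have hpos : ∀ s, s ≤ T → 1 ≤ m s := by
    intro s
    induction s with
    | zero => intro _; omega
    | succ n ih =>
      intro h
      obtain ⟨hj2, hjm, _, hm'⟩ := hstep n (by omega)
      omega
  have key : ∀ s < T, cost s ≤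
      2 * OPT * Real.log (m s) - 2 * OPT * Real.log (m (s+1)) := by
    intro s hs
    obtain ⟨hj2, hjm, hc, hm'⟩ := hstep s hs
    have hms : 1 ≤ m s := hpos s (by omega)
    have hms' : 1 ≤ m (s+1) := hpos (s+1) (by omega)
    have hx : (0:ℝ) < m s := by exact_mod_cast hms
    have hy : (0:ℝ) < m (s+1) := by exact_mod_cast hms'
    have hlog : Real.log (m (s+1)) - Real.log (m s) ≤ (m (s+1) : ℝ) / (m s) - 1 := by
      have := Real.log_le_sub_one_of_pos (div_pos hy hx)
      rwa [Real.log_div (ne_of_gt hy) (ne_of_gt hx)] at this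
    have hyval : (m (s+1) : ℝ) = (m s : ℝ) - j s + 1 := by
      rw [hm']; push_cast [Nat.cast_sub hjm]; ring
    have hdiff : ((j s : ℝ) - 1) / (m s) ≤
        Real.log (m s) - Real.log (m (s+1)) := by
      have : (m (s+1) : ℝ) / (m s) - 1 = -(((j s : ℝ) - 1) / (m s)) := by
        rw [hyval]; field_simp; ring
      linarith [hlog, this ▸ hlog]
    calc cost s ≤ ((j s : ℝ) / (m s)) * OPT := hc
      _ ≤ 2 * OPT * (((j s : ℝ) - 1) / (m s)) := by
          have h1 : ((j s : ℝ) / (m s)) * OPT = ((j s : ℝ) * OPT) / (m s) := by ring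
          have h2 : 2 * OPT * (((j s : ℝ) - 1) / (m s)) = (2 * OPT * ((j s : ℝ) - 1)) / (m s) := by ring
          rw [h1, h2]
          apply (div_le_div_iff_of_pos_right hx).mpr
          have hj2' : (2:ℝ) ≤ j s := by exact_mod_cast hj2
          nlinarith
      _ ≤ 2 * OPT * (Real.log (m s) - Real.log (m (s+1))) := by
          apply mul_le_mul_of_nonneg_left hdiff (by linarith)
      _ = 2 * OPT * Real.log (m s) - 2 * OPT * Real.log (m (s+1)) := by ring
  calc ∑ s ∈ Finset.range T, cost s
      ≤ ∑ s ∈ Finset.range T,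
        (2 * OPT * Real.log (m s) - 2 * OPT * Real.log (m (s+1))) := by
        exact Finset.sum_le_sum (fun s hs => key s (Finset.mem_range.mp hs))
    _ = 2 * OPT * Real.log (m 0) - 2 * OPT * Real.log (m T) :=
        Finset.sum_range_sub' (fun s => 2 * OPT * Real.log (m s)) T
    _ = 2 * OPT * Real.log k := by rw [hm0, hmT]; simp
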